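/- A covering array CA(N; t, k, v) exists for all sufficiently large N; more precisely, for fixed t, v ≥ 2 there exists a constant D such that for all k ≥ t, CAN(t, k, v) ≤ D · log₂ k, i.e. CAN(t,k,v) = O(log₂ k). -/

import Mathlib

/-- `A` is a covering array of strength `t`: every `t` distinct columns cover all
`t`-tuples over the alphabet among their rows. -/
def IsCoveringArray {N k v : ℕ} (t : ℕ) (A : Fin N → Fin k → Fin v) : Prop :=
  ∀ cols : Fin t → Fin k, Function.Injective cols →
    ∀ tup : Fin t → Fin v, ∃ r : Fin N, ∀ i, A r (cols i) = tup i

/-- `CAN t k v` is the minimum number of rows of a covering array of strength `t`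
with `k` columns over a `v`-letter alphabet. -/
noncomputable def CAN (t k v : ℕ) : ℕ :=
  sInf {N | ∃ A : Fin N → Fin k → Fin v, IsCoveringArray t A}

open Finset

/-- Counting: functions agreeing with `tup` on the (injective) columns number at
least `v ^ (k - t)`. -/
lemma goodRow_card_ge (t k v : ℕ) (cols : Fin t → Fin k) (hinj : Function.Injective cols)
    (tup : Fin t → Fin v) :
    v ^ (k - t) ≤ ((univ : Finset (Fin k → Fin v)).filter
      (fun g => ∀ i, g (cols i) = tup i)).card := by
  classical
  set e : ({x : Fin k // x ∉ Set.range cols} → Fin v) → (Fin k → Fin v) :=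
    fun f x => if h : x ∈ Set.range cols then tup h.choose else f ⟨x, h⟩ with he
  have hmem : ∀ f, e f ∈ (univ : Finset (Fin k → Fin v)).filter
      (fun g => ∀ i, g (cols i) = tup i) := by
    intro f
    simp only [mem_filter, mem_univ, true_and]
    intro i
    have h : cols i ∈ Set.range cols := ⟨i, rfl⟩
    simp only [he, dif_pos h]
    congr 1
    exact hinj h.choose_spec
  have hinj' : Function.Injective e := by
    intro f f' hff
    funext x
    have hx := congrFun hff x.1
    simp only [he] at hx
    rw [dif_neg x.2, dif_neg x.2] at hx
    exact hx
  have hcard : Fintype.card ({x : Fin k // x ∉ Set.range cols} → Fin v) = v ^ (k - t) := by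
    rw [Fintype.card_fun, Fintype.card_fin]
    congr 1
    rw [Fintype.card_subtype_compl]
    have : Fintype.card {x : Fin k // x ∈ Set.range cols} = t := by
      rw [Fintype.card_congr (Equiv.ofInjective cols hinj).symm, Fintype.card_fin]
    rw [this, Fintype.card_fin]
  calc v ^ (k - t) = (univ : Finset ({x : Fin k // x ∉ Set.range cols} → Fin v)).card := by
        rw [card_univ, hcard]
    _ ≤ _ := card_le_card_of_injOn e (fun a _ => hmem a) (hinj'.injOn)

/-- Probabilistic (counting) existence of a covering array with `N` rows. -/
lemma exists_coveringArray (t k v N : ℕ) (htk : t ≤ k) (hv : 1 ≤ v)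
    (hN : k ^ t * v ^ t * (v ^ t - 1) ^ N < (v ^ t) ^ N) :
    ∃ A : Fin N → Fin k → Fin v, IsCoveringArray t A := by
  classical
  by_contra h
  push_neg at h
  -- every array has a bad (cols, tup) pair
  have hbad : ∀ A : Fin N → Fin k → Fin v, ∃ cols : Fin t → Fin k, Function.Injective cols ∧
      ∃ tup : Fin t → Fin v, ∀ r : Fin N, ∃ i, A r (cols i) ≠ tup i := by
    intro A
    have := h A
    unfold IsCoveringArray at this
    push_neg at this
    exact this
  set Bad : (Fin t → Fin k) × (Fin t → Fin v) → Finset (Fin N → Fin k → Fin v) :=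
    fun p => Fintype.piFinset (fun _ : Fin N =>
      (univ : Finset (Fin k → Fin v)).filter (fun g => ¬ ∀ i, g (p.1 i) = p.2 i)) with hBad
  set P : Finset ((Fin t → Fin k) × (Fin t → Fin v)) :=
    ((univ : Finset (Fin t → Fin k)).filter (fun c => Function.Injective c)) ×ˢ
      (univ : Finset (Fin t → Fin v)) with hP
  -- union bound
  have hsub : (univ : Finset (Fin N → Fin k → Fin v)) ⊆ P.biUnion Bad := by
    intro A _
    obtain ⟨cols, hinj, tup, hb⟩ := hbad A
    refine mem_biUnion.2 ⟨(cols, tup), ?_, ?_⟩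
    · simp [hP, hinj]
    · rw [hBad]
      rw [Fintype.mem_piFinset]
      intro r
      simp only [mem_filter, mem_univ, true_and]
      intro hc
      obtain ⟨i, hi⟩ := hb r
      exact hi (hc i)
  -- each bad event has at most (v^(k-t))^N * (v^t-1)^N elements
  have hBcard : ∀ p ∈ P, (Bad p).card ≤ (v ^ (k - t)) ^ N * (v ^ t - 1) ^ N := by
    intro p hp
    have hpinj : Function.Injective p.1 := by
      rw [hP, mem_product] at hp
      simpa using hp.1
    have hrow : ((univ : Finset (Fin k → Fin v)).filter
        (fun g => ¬ ∀ i, g (p.1 i) = p.2 i)).card ≤ v ^ (k - t) * (v ^ t - 1) := by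
      have hsplit : ((univ : Finset (Fin k → Fin v)).filter
            (fun g => ∀ i, g (p.1 i) = p.2 i)).card
          + ((univ : Finset (Fin k → Fin v)).filter
            (fun g => ¬ ∀ i, g (p.1 i) = p.2 i)).card
          = (univ : Finset (Fin k → Fin v)).card :=
        card_filter_add_card_filter_not _
      have huniv : (univ : Finset (Fin k → Fin v)).card = v ^ k := by
        rw [card_univ, Fintype.card_fun, Fintype.card_fin, Fintype.card_fin]
      have hgood := goodRow_card_ge t k v p.1 hpinj p.2
      have hvk : v ^ k = v ^ (k - t) * v ^ t := by
        rw [← pow_add]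
        congr 1
        exact (Nat.sub_add_cancel htk).symm
      have heq : v ^ (k - t) * (v ^ t - 1) = v ^ k - v ^ (k - t) := by
        rw [Nat.mul_sub, mul_one, hvk]
      rw [huniv] at hsplit
      rw [heq]
      have hle : v ^ (k - t) ≤ v ^ k := Nat.pow_le_pow_right hv (Nat.sub_le k t)
      generalize hG : ((univ : Finset (Fin k → Fin v)).filter
          (fun g => ∀ i, g (p.1 i) = p.2 i)).card = G at hsplit hgood
      generalize hB : ((univ : Finset (Fin k → Fin v)).filter
          (fun g => ¬ ∀ i, g (p.1 i) = p.2 i)).card = B at hsplit ⊢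
      clear hG hB hpinj hp heq hvk huniv
      omega
    calc (Bad p).card = (((univ : Finset (Fin k → Fin v)).filter
          (fun g => ¬ ∀ i, g (p.1 i) = p.2 i)).card) ^ N := by
          rw [hBad]
          rw [Fintype.card_piFinset]
          simp
      _ ≤ (v ^ (k - t) * (v ^ t - 1)) ^ N := Nat.pow_le_pow_left hrow N
      _ = (v ^ (k - t)) ^ N * (v ^ t - 1) ^ N := mul_pow _ _ _
  have hPcard : P.card ≤ k ^ t * v ^ t := by
    have h1 : ((univ : Finset (Fin t → Fin k)).filter
        (fun c => Function.Injective c)).card ≤ k ^ t := by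
      calc _ ≤ (univ : Finset (Fin t → Fin k)).card := card_filter_le _ _
        _ = k ^ t := by rw [card_univ, Fintype.card_fun, Fintype.card_fin, Fintype.card_fin]
    rw [hP, card_product, card_univ, Fintype.card_fun, Fintype.card_fin, Fintype.card_fin]
    exact Nat.mul_le_mul h1 le_rfl
  -- put it together
  have hchain : (v ^ (k - t)) ^ N * (v ^ t) ^ N ≤
      (v ^ (k - t)) ^ N * (k ^ t * v ^ t * (v ^ t - 1) ^ N) := by
    have huniv : (univ : Finset (Fin N → Fin k → Fin v)).card
        = (v ^ (k - t)) ^ N * (v ^ t) ^ N := by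
      have hvk : v ^ k = v ^ (k - t) * v ^ t := by
        rw [← pow_add]
        congr 1
        exact (Nat.sub_add_cancel htk).symm
      rw [card_univ, Fintype.card_fun, Fintype.card_fun, Fintype.card_fin, Fintype.card_fin,
        Fintype.card_fin, hvk, mul_pow]
    calc (v ^ (k - t)) ^ N * (v ^ t) ^ N
        = (univ : Finset (Fin N → Fin k → Fin v)).card := huniv.symm
      _ ≤ (P.biUnion Bad).card := card_le_card hsub
      _ ≤ ∑ p ∈ P, (Bad p).card := card_biUnion_le
      _ ≤ ∑ _p ∈ P, (v ^ (k - t)) ^ N * (v ^ t - 1) ^ N := sum_le_sum hBcard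
      _ = P.card * ((v ^ (k - t)) ^ N * (v ^ t - 1) ^ N) := by rw [sum_const, smul_eq_mul]
      _ ≤ (k ^ t * v ^ t) * ((v ^ (k - t)) ^ N * (v ^ t - 1) ^ N) :=
          Nat.mul_le_mul hPcard le_rfl
      _ = (v ^ (k - t)) ^ N * (k ^ t * v ^ t * (v ^ t - 1) ^ N) := by ring
  have hpos : 0 < (v ^ (k - t)) ^ N := Nat.pow_pos (Nat.pow_pos hv)
  have hfin := Nat.le_of_mul_le_mul_left hchain hpos
  exact absurd hN (not_lt.mpr hfin)

/-- Key elementary inequality: `a^n * (a + n) ≤ (a+1)^n * a`. -/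
lemma pow_mul_add_le (a : ℕ) : ∀ n : ℕ, a ^ n * (a + n) ≤ (a + 1) ^ n * a := by
  intro n
  induction n with
  | zero => simp
  | succ n ih =>
    have hle : a ^ n ≤ (a + 1) ^ n := Nat.pow_le_pow_left (by omega) n
    have h1 : a ^ (n + 1) * (a + (n + 1)) = a * (a ^ n * (a + n)) + a * a ^ n := by ring
    have h2 : (a + 1) ^ (n + 1) * a = a * ((a + 1) ^ n * a) + a * (a + 1) ^ n := by ring
    rw [h1, h2]
    exact Nat.add_le_add (Nat.mul_le_mul_left a ih) (Nat.mul_le_mul_left a hle)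

lemma two_mul_pred_pow_le (m : ℕ) (hm : 1 ≤ m) : 2 * (m - 1) ^ m ≤ m ^ m := by
  rcases Nat.eq_or_lt_of_le hm with h | h
  · subst h; simp
  have h2 : 2 ≤ m := h
  have key := pow_mul_add_le (m - 1) m
  have hm1 : m - 1 + 1 = m := by omega
  rw [hm1] at key
  -- key : (m-1)^m * (m - 1 + m) ≤ m ^ m * (m - 1)
  have h3 : 2 * (m - 1) ^ m * (m - 1) ≤ (m - 1) ^ m * (m - 1 + m) := by
    have : 2 * (m - 1) ≤ m - 1 + m := by omega
    calc 2 * (m - 1) ^ m * (m - 1) = (m - 1) ^ m * (2 * (m - 1)) := by ring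
      _ ≤ (m - 1) ^ m * (m - 1 + m) := Nat.mul_le_mul_left _ this
  have h4 : 2 * (m - 1) ^ m * (m - 1) ≤ m ^ m * (m - 1) := le_trans h3 key
  exact Nat.le_of_mul_le_mul_right h4 (by omega)

theorem CAN_upper_log (t v : ℕ) (ht : 2 ≤ t) (hv : 2 ≤ v) :
    ∃ D : ℝ, ∀ k : ℕ, t ≤ k → (CAN t k v : ℝ) ≤ D * Real.logb 2 k := by
  classical
  set m : ℕ := v ^ t with hmdef
  have hm2 : 2 ≤ m := by
    calc 2 ≤ v := hv
      _ = v ^ 1 := (pow_one v).symm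
      _ ≤ v ^ t := Nat.pow_le_pow_right (by omega) (by omega)
  refine ⟨(m : ℝ) * (2 * t + m), ?_⟩
  intro k hk
  have hk2 : 2 ≤ k := le_trans ht hk
  set L : ℕ := Nat.log 2 k with hLdef
  set s : ℕ := t * (L + 1) + m with hsdef
  set N : ℕ := m * s with hNdef
  -- Step 1: the combinatorial bound needed for existence
  have hexp : 2 ^ s * (m - 1) ^ N ≤ m ^ N := by
    have hbase : 2 * (m - 1) ^ m ≤ m ^ m := two_mul_pred_pow_le m (by omega)
    calc 2 ^ s * (m - 1) ^ N = (2 * (m - 1) ^ m) ^ s := by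
          rw [mul_pow, ← pow_mul, hNdef]
      _ ≤ (m ^ m) ^ s := Nat.pow_le_pow_left hbase s
      _ = m ^ N := by rw [← pow_mul, hNdef]
  have hks : k ^ t * m < 2 ^ s := by
    have h1 : k < 2 ^ (L + 1) := Nat.lt_pow_succ_log_self (by norm_num) k
    have h2 : k ^ t < (2 ^ (L + 1)) ^ t := Nat.pow_lt_pow_left h1 (by omega)
    have h3 : m < 2 ^ m := Nat.lt_two_pow_self
    calc k ^ t * m < (2 ^ (L + 1)) ^ t * 2 ^ m := Nat.mul_lt_mul'' h2 h3
      _ = 2 ^ s := by rw [← pow_mul, ← pow_add, hsdef]; ring_nf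
  have hN : k ^ t * v ^ t * (v ^ t - 1) ^ N < (v ^ t) ^ N := by
    rw [← hmdef]
    calc k ^ t * m * (m - 1) ^ N < 2 ^ s * (m - 1) ^ N := by
          have hpos : 0 < (m - 1) ^ N := Nat.pow_pos (by omega)
          exact (Nat.mul_lt_mul_right hpos).mpr hks
      _ ≤ m ^ N := hexp
  obtain ⟨A, hA⟩ := exists_coveringArray t k v N hk (by omega) hN
  have hCAN : CAN t k v ≤ N := Nat.sInf_le ⟨A, hA⟩
  -- Step 2: translate to real logarithm bound
  have hlogL : (L : ℝ) ≤ Real.logb 2 k := Real.natLog_le_logb k 2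
  have hlog1 : 1 ≤ Real.logb 2 k := by
    have := Real.logb_le_logb_of_le (b := 2) (by norm_num) (x := 2) (y := (k : ℝ))
      (by norm_num) (by exact_mod_cast hk2)
    rwa [Real.logb_self_eq_one (by norm_num)] at this
  have hcast : (N : ℝ) = (m : ℝ) * ((t : ℝ) * ((L : ℝ) + 1) + (m : ℝ)) := by
    rw [hNdef, hsdef]; push_cast; ring
  have hmR : (0 : ℝ) ≤ (m : ℝ) := by positivity
  have htR : (0 : ℝ) ≤ (t : ℝ) := by positivity
  calc (CAN t k v : ℝ) ≤ (N : ℝ) := by exact_mod_cast hCAN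
    _ = (m : ℝ) * ((t : ℝ) * ((L : ℝ) + 1) + (m : ℝ)) := hcast
    _ ≤ (m : ℝ) * (2 * t + m) * Real.logb 2 k := by
        nlinarith [mul_nonneg hmR htR, mul_nonneg hmR hmR,
          mul_nonneg (mul_nonneg hmR htR) (sub_nonneg.mpr hlogL),
          mul_nonneg (mul_nonneg hmR htR) (sub_nonneg.mpr hlog1),
          mul_nonneg (mul_nonneg hmR hmR) (sub_nonneg.mpr hlog1)]
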